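/- For each s, let g_s : 𝔹^s → 𝔹^{2^s} be the transformation sending v to the tuple of all subset-XORs (⊕_{i∈T} v_i)_{T ⊆ {1,…,s}} (with the empty XOR equal to 0). There exists a family of reversible circuits (S_s) consisting only of CNOT gates and a sequence q(s) such that S_s implements g_s with q(s) additional inputs and, as s → ∞, D(S_s) ~ s, L(S_s) ~ 3·2^s and q(s) ~ 2^{s+1}. -/

import Mathlib

open Filter

namespace Rev

/-- A reversible gate `TOF(I; t)` on `N` lines: a control set `I` with `|I| ≤ 2`
and a target `t ∉ I`.  `|I| = 0, 1, 2` correspond to NOT, CNOT, C²NOT. -/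
structure Gate (N : ℕ) where
  I : Finset (Fin N)
  t : Fin N
  card_le : I.card ≤ 2
  t_not_mem : t ∉ I

/-- The transformation computed by a gate: the target coordinate is XORed with the
conjunction of the control coordinates (the empty conjunction is `1`). -/
def Gate.apply {N : ℕ} (g : Gate N) (x : Fin N → Bool) : Fin N → Bool :=
  fun j => if j = g.t then xor (x g.t) (decide (∀ i ∈ g.I, x i = true)) else x j

/-- A reversible circuit: a finite sequence (composition) of gates. -/
abbrev Circuit (N : ℕ) := List (Gate N)

/-- The transformation computed by a circuit (composition of the gate maps). -/
def Circuit.eval {N : ℕ} (S : Circuit N) (x : Fin N → Bool) : Fin N → Bool :=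
  S.foldl (fun v g => g.apply v) x

/-- Gate complexity: the number of gates. -/
def Circuit.L {N : ℕ} (S : Circuit N) : ℕ := S.length

/-- The number of NOT and CNOT gates. -/
def Circuit.LC {N : ℕ} (S : Circuit N) : ℕ := (S.filter fun g => g.I.card ≤ 1).length

/-- The number of C²NOT (Toffoli) gates. -/
def Circuit.LT {N : ℕ} (S : Circuit N) : ℕ := (S.filter fun g => g.I.card = 2).length

/-- The quantum weight, given weights `WC` for NOT/CNOT gates and `WT` for C²NOT gates. -/
noncomputable def Circuit.W {N : ℕ} (WC WT : ℝ) (S : Circuit N) : ℝ :=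
  WC * S.LC + WT * S.LT

/-- A circuit has depth one if the sets `{t} ∪ I` of its gates are pairwise disjoint. -/
def DepthOne {N : ℕ} (S : Circuit N) : Prop :=
  S.Pairwise fun g₁ g₂ => Disjoint (insert g₁.t g₁.I) (insert g₂.t g₂.I)

/-- The depth of a circuit: the minimal number of depth-one sub-circuits whose
concatenation is the circuit. -/
noncomputable def Circuit.D {N : ℕ} (S : Circuit N) : ℕ :=
  sInf {d | ∃ parts : List (Circuit N),
    parts.length = d ∧ parts.flatten = S ∧ ∀ p ∈ parts, DepthOne p}

/-- Padding an input vector with zero values on `q` additional inputs. -/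
def pad {n q : ℕ} (x : Fin n → Bool) : Fin (n + q) → Bool :=
  fun i => if h : (i : ℕ) < n then x ⟨i, h⟩ else false

/-- A circuit `S` with `n + q` inputs implements `f : 𝔹ⁿ → 𝔹ᵐ` with `q` additional
inputs: there is a permutation `π` of the output positions such that for every `x`,
applying `S` to `⟨x, 0, …, 0⟩` and permuting the coordinates by `π` yields a vector
whose first `m` coordinates equal `f x`. -/
def Implements {n q m : ℕ} (S : Circuit (n + q)) (f : (Fin n → Bool) → Fin m → Bool) :
    Prop :=
  m ≤ n + q ∧ ∃ π : Equiv.Perm (Fin (n + q)), ∀ x : Fin n → Bool, ∀ j : Fin m,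
    ∀ hj : (j : ℕ) < n + q, Circuit.eval S (pad x) (π ⟨j, hj⟩) = f x j

/-- `f ∈ F(n, q)`: `f : 𝔹ⁿ → 𝔹ⁿ` is implementable with `q` additional inputs. -/
def Implementable (n q : ℕ) (f : (Fin n → Bool) → Fin n → Bool) : Prop :=
  ∃ S : Circuit (n + q), Implements S f

/-- `L(f, q)`: minimal gate complexity of a circuit implementing `f` with `q`
additional inputs. -/
noncomputable def Lmin (n q : ℕ) (f : (Fin n → Bool) → Fin n → Bool) : ℕ :=
  sInf {l | ∃ S : Circuit (n + q), Implements S f ∧ S.L = l}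

/-- The Shannon gate complexity function `L(n, q)`. -/
noncomputable def Lsh (n q : ℕ) : ℕ :=
  sSup {l | ∃ f, Implementable n q f ∧ Lmin n q f = l}

/-- `D(f, q)`: minimal depth of a circuit implementing `f` with `q` additional inputs. -/
noncomputable def Dmin (n q : ℕ) (f : (Fin n → Bool) → Fin n → Bool) : ℕ :=
  sInf {d | ∃ S : Circuit (n + q), Implements S f ∧ S.D = d}

/-- The Shannon depth function `D(n, q)`. -/
noncomputable def Dsh (n q : ℕ) : ℕ :=
  sSup {d | ∃ f, Implementable n q f ∧ Dmin n q f = d}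

/-- `W(f, q)`: minimal quantum weight of a circuit implementing `f` with `q`
additional inputs. -/
noncomputable def Wmin (WC WT : ℝ) (n q : ℕ) (f : (Fin n → Bool) → Fin n → Bool) : ℝ :=
  sInf {w | ∃ S : Circuit (n + q), Implements S f ∧ Circuit.W WC WT S = w}

/-- The Shannon quantum weight function `W(n, q)`. -/
noncomputable def Wsh (WC WT : ℝ) (n q : ℕ) : ℝ :=
  sSup {w | ∃ f, Implementable n q f ∧ Wmin WC WT n q f = w}

/-- `a ~ b`: `a n / b n → 1`. -/
def AsympEquiv (a b : ℕ → ℝ) : Prop :=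
  Tendsto (fun n => a n / b n) atTop (nhds 1)

/-- `a ≲ b`: `limsup (a n / b n) ≤ 1`. -/
def AsympLE (a b : ℕ → ℝ) : Prop :=
  Filter.limsup (fun n => a n / b n) atTop ≤ 1

/-- A growing function: nondecreasing and tending to `+∞`. -/
def Growing (φ : ℕ → ℝ) : Prop :=
  Monotone φ ∧ Tendsto φ atTop atTop

/-- `2 ^ (n - ⌈n / φ(n)⌉)` as a real number. -/
noncomputable def pow2e (φ : ℕ → ℝ) (n : ℕ) : ℝ :=
  (2 : ℝ) ^ ((n : ℤ) - ⌈(n : ℝ) / φ n⌉)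

end Rev

namespace Rev

/-- `g_s : 𝔹ˢ → 𝔹^{2ˢ}`: the tuple of all subset-XORs `⊕_{i ∈ T} v_i`, the index
`j : Fin (2 ^ s)` encoding the subset `T ⊆ {1, …, s}` via its binary digits. -/
def subsetXorAll (s : ℕ) : (Fin s → Bool) → Fin (2 ^ s) → Bool :=
  fun v j => decide ((Finset.univ.filter
    fun i : Fin s => (j : ℕ).testBit i.val = true ∧ v i = true).card % 2 = 1)

-- ============ generic layer machinery ============

def gateCT {N : ℕ} (c t : Fin N) (h : c ≠ t) : Gate N :=
  ⟨{c}, t, by simp, by simp [Finset.mem_singleton]; exact fun e => h e.symm⟩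

def mkg {N : ℕ} (c t : Fin N) : Option (Gate N) :=
  if h : c = t then none else some (gateCT c t h)

def layerOf {N : ℕ} (f : Fin N → Option (Fin N)) : Circuit N :=
  (List.finRange N).filterMap fun t => (f t).bind fun c => mkg c t

def stepf {N : ℕ} (f : Fin N → Option (Fin N)) (x : Fin N → Bool) (t : Fin N) : Bool :=
  match f t with
  | some c => xor (x t) (x c)
  | none => x t

lemma eval_append {N : ℕ} (A B : Circuit N) (x : Fin N → Bool) :
    Circuit.eval (A ++ B) x = Circuit.eval B (Circuit.eval A x) := by
  simp [Circuit.eval, List.foldl_append]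

lemma apply_gateCT {N : ℕ} (c t : Fin N) (h : c ≠ t) (x : Fin N → Bool) (u : Fin N) :
    (gateCT c t h).apply x u = if u = t then xor (x t) (x c) else x u := by
  simp [gateCT, Gate.apply]

lemma eval_filterMap {N : ℕ} (f : Fin N → Option (Fin N))
    (H : ∀ t c, f t = some c → f c = none) :
    ∀ (L : List (Fin N)), L.Nodup → ∀ (x : Fin N → Bool) (t : Fin N),
      Circuit.eval (L.filterMap fun u => (f u).bind fun c => mkg c u) x t =
        if t ∈ L then stepf f x t else x t := by
  intro L
  induction L with
  | nil => intro _ x t; simp [Circuit.eval]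
  | cons a L ih =>
    intro hL x t
    obtain ⟨ha, hL'⟩ := List.nodup_cons.mp hL
    rcases hfa : f a with _ | c
    · rw [List.filterMap_cons_none (by rw [hfa]; rfl)]
      rw [ih hL' x t]
      by_cases hta : t = a
      · subst hta
        simp [ha, List.mem_cons, stepf, hfa]
      · simp [List.mem_cons, hta]
    · have hca : c ≠ a := by
        intro e
        have h2 := H a c hfa; rw [e] at h2
        rw [h2] at hfa; simp at hfa
      rw [List.filterMap_cons_some (b := gateCT c a hca)
        (by rw [hfa, Option.bind_some, mkg, dif_neg hca])]
      have : Circuit.eval (gateCT c a hca :: (L.filterMap fun u => (f u).bind fun c => mkg c u)) x t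
          = Circuit.eval (L.filterMap fun u => (f u).bind fun c => mkg c u) ((gateCT c a hca).apply x) t := by
        simp [Circuit.eval]
      rw [this, ih hL' _ t]
      set x' := (gateCT c a hca).apply x with hx'
      have hx'u : ∀ u, x' u = if u = a then xor (x a) (x c) else x u := by
        intro u; rw [hx', apply_gateCT]
      by_cases htL : t ∈ L
      · have hta : t ≠ a := fun e => ha (e ▸ htL)
        rw [if_pos htL, if_pos (List.mem_cons.mpr (Or.inr htL))]
        unfold stepf
        rcases hft : f t with _ | c'
        · simp [hx'u, hta]
        · have hc'a : c' ≠ a := by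
            intro e; subst e
            have := H t c' hft; rw [this] at hfa; simp at hfa
          simp [hx'u, hta, hc'a]
      · rw [if_neg htL]
        by_cases hta : t = a
        · subst hta
          rw [if_pos (List.mem_cons_self)]
          unfold stepf
          simp [hx'u, hfa]
        · rw [if_neg (by simp [List.mem_cons, hta, htL])]
          simp [hx'u, hta]

lemma eval_layerOf {N : ℕ} (f : Fin N → Option (Fin N))
    (H : ∀ t c, f t = some c → f c = none) (x : Fin N → Bool) :
    Circuit.eval (layerOf f) x = stepf f x := by
  funext t
  rw [layerOf, eval_filterMap f H _ (List.nodup_finRange N) x t,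
    if_pos (List.mem_finRange t)]

lemma mem_layerOf_elim {N : ℕ} {f : Fin N → Option (Fin N)} {g : Gate N}
    (hg : g ∈ layerOf f) :
    ∃ (t c : Fin N) (h : c ≠ t), f t = some c ∧ g = gateCT c t h := by
  rw [layerOf, List.mem_filterMap] at hg
  obtain ⟨t, -, ht⟩ := hg
  rcases hft : f t with _ | c
  · rw [hft] at ht; simp at ht
  · rw [hft] at ht
    simp only [Option.bind, mkg] at ht
    by_cases hca : c = t
    · rw [dif_pos hca] at ht; simp at ht
    · rw [dif_neg hca] at ht
      exact ⟨t, c, hca, hft, (Option.some.injEq _ _ ▸ ht).symm⟩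

lemma mem_layerOf_intro {N : ℕ} {f : Fin N → Option (Fin N)} {t c : Fin N}
    (hf : f t = some c) (h : c ≠ t) : gateCT c t h ∈ layerOf f := by
  rw [layerOf, List.mem_filterMap]
  exact ⟨t, List.mem_finRange t, by rw [hf]; simp only [Option.bind, mkg, dif_neg h]⟩

lemma depthOne_layerOf {N : ℕ} (f : Fin N → Option (Fin N))
    (H : ∀ t c, f t = some c → f c = none)
    (Hinj : ∀ t₁ t₂ c, f t₁ = some c → f t₂ = some c → t₁ = t₂) :
    DepthOne (layerOf f) := by
  rw [DepthOne, layerOf, List.pairwise_filterMap]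
  have hnd : (List.finRange N).Pairwise (· ≠ ·) := List.nodup_finRange N
  refine List.Pairwise.imp_of_mem ?_ hnd
  intro t₁ t₂ _ _ hne g₁ hg₁ g₂ hg₂
  rcases hf₁ : f t₁ with _ | c₁
  · rw [hf₁] at hg₁; simp at hg₁
  rcases hf₂ : f t₂ with _ | c₂
  · rw [hf₂] at hg₂; simp at hg₂
  have hc₁ : c₁ ≠ t₁ := by
    intro e
    have h2 := H t₁ c₁ hf₁; rw [e] at h2; rw [h2] at hf₁; simp at hf₁
  have hc₂ : c₂ ≠ t₂ := by
    intro e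
    have h2 := H t₂ c₂ hf₂; rw [e] at h2; rw [h2] at hf₂; simp at hf₂
  rw [hf₁] at hg₁; rw [hf₂] at hg₂
  rw [Option.bind_some, mkg, dif_neg hc₁, Option.some.injEq] at hg₁
  rw [Option.bind_some, mkg, dif_neg hc₂, Option.some.injEq] at hg₂
  subst hg₁; subst hg₂
  simp only [gateCT]
  rw [Finset.disjoint_left]
  intro u hu hu'
  simp only [Finset.mem_insert, Finset.mem_singleton] at hu hu'
  rcases hu with rfl | rfl <;> rcases hu' with h' | h'
  · exact hne h'
  · subst h'; have := H t₂ u hf₂; rw [this] at hf₁; simp at hf₁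
  · subst h'; have := H t₁ u hf₁; rw [this] at hf₂; simp at hf₂
  · subst h'; exact hne (Hinj t₁ t₂ u hf₁ hf₂)

lemma card_layerOf {N : ℕ} {f : Fin N → Option (Fin N)} {g : Gate N}
    (hg : g ∈ layerOf f) : g.I.card = 1 := by
  obtain ⟨t, c, h, -, rfl⟩ := mem_layerOf_elim hg
  simp [gateCT]

lemma length_filterMap' {α β : Type*} (F : α → Option β) :
    ∀ (l : List α), (l.filterMap F).length = (l.map fun a => if (F a).isSome then 1 else 0).sum := by
  intro l
  induction l with
  | nil => simp
  | cons a l ih =>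
    rw [List.filterMap_cons]
    rcases h : F a with _ | b <;> simp [h, ih, Nat.add_comm]

lemma length_layerOf {N : ℕ} (f : Fin N → Option (Fin N))
    (H : ∀ t c, f t = some c → f c = none) :
    (layerOf f).length = ∑ t : Fin N, (if (f t).isSome then 1 else 0) := by
  rw [layerOf, length_filterMap', Fin.sum_univ_def]
  congr 1
  apply List.map_congr_left
  intro t _
  rcases hft : f t with _ | c
  · simp [Option.bind]
  · have hc : c ≠ t := by
      intro e
      have h2 := H t c hft; rw [e] at h2; rw [h2] at hft; simp at hft
    simp [Option.bind, mkg, dif_neg hc]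


local notation "lg" => Nat.log 2


def qq (s : ℕ) : ℕ := 2^(s+1) - 1
abbrev NN (s : ℕ) : ℕ := s + qq s
lemma NN_eq (s : ℕ) : NN s = s + 2^s + (2^s - 1) := by
  have : (2:ℕ)^(s+1) = 2 * 2^s := by ring
  have h1 : (1:ℕ) ≤ 2^s := Nat.one_le_two_pow
  simp only [NN, qq]; omega

lemma lg_pow (j : ℕ) : lg (2^j) = j := Nat.log_pow one_lt_two j
lemma pow_lg_le {m : ℕ} (h : 1 ≤ m) : 2^(lg m) ≤ m := Nat.pow_log_le_self 2 (by omega)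
lemma lt_pow_lg (m : ℕ) : m < 2^(lg m + 1) := Nat.lt_pow_succ_log_self one_lt_two m
lemma lg_lt {m j : ℕ} (h1 : 1 ≤ m) (h2 : m < 2^j) : lg m < j := Nat.log_lt_of_lt_pow (by omega) h2
lemma lg_eq {j m : ℕ} (h1 : 2^j ≤ m) (h2 : m < 2^(j+1)) : lg m = j := Nat.log_eq_of_pow_le_of_lt_pow h1 h2
lemma sub_pow_lt {m : ℕ} (h : 1 ≤ m) : m - 2^(lg m) < 2^(lg m) := by
  have h1 := lt_pow_lg m; have h2 := pow_lg_le h; rw [pow_succ] at h1; omega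
lemma lg_lt_self_of_sub {k : ℕ} (h1 : 1 ≤ k) (hi : k - 2^(lg k) ≠ 0) :
    lg (k - 2^(lg k)) < lg k := lg_lt (by omega) (sub_pow_lt h1)

def cpos (s k : ℕ) : ℕ := s + 2^s + (k - 1)
def tau (k : ℕ) : ℕ := if k - 2^(lg k) = 0 then 1 else lg (k - 2^(lg k)) + 2
def ctrlN (s r t : ℕ) : Option ℕ :=
  if t < s then none
  else if t < s + 2^s then
    let m := t - s
    if m = 0 then none
    else if r = lg m + 2 then some (cpos s m)
    else if r = lg m + 3 then some (s + (m - 2^(lg m)))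
    else none
  else
    let k := t - (s + 2^s) + 1
    let i := k - 2^(lg k)
    if i = 0 then (if r = 1 then some (lg k) else none)
    else if r = lg i + 2 then some (cpos s (k - 2^(lg i)))
    else none
def xv (s : ℕ) (x : Fin s → Bool) (j : ℕ) : Bool := if h : j < s then x ⟨j, h⟩ else false
def P (s : ℕ) (x : Fin s → Bool) (m : ℕ) : Bool :=
  decide ((Finset.univ.filter
    fun i : Fin s => m.testBit i.val = true ∧ x i = true).card % 2 = 1)
def sttN (s : ℕ) (x : Fin s → Bool) (n t : ℕ) : Bool :=
  if h : t < s then x ⟨t, h⟩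
  else if t < s + 2^s then
    let m := t - s
    if m = 0 then false
    else if lg m + 3 < n then P s x m
    else if lg m + 2 < n then xv s x (lg m)
    else false
  else
    let k := t - (s + 2^s) + 1
    if tau k < n then xv s x (lg k) else false
lemma ctrlN_in {s r t : ℕ} (h : t < s) : ctrlN s r t = none := by simp [ctrlN, h]
lemma ctrlN_u {s r m : ℕ} (hm : m < 2^s) :
    ctrlN s r (s + m) =
      if m = 0 then none
      else if r = lg m + 2 then some (cpos s m)
      else if r = lg m + 3 then some (s + (m - 2^(lg m)))
      else none := by
  have h1 : ¬ (s + m < s) := by omega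
  have h2 : s + m < s + 2^s := by omega
  have h3 : s + m - s = m := by omega
  simp only [ctrlN, h3]; rw [if_neg h1, if_pos h2]
lemma ctrlN_c {s r k : ℕ} (hk : 1 ≤ k) :
    ctrlN s r (cpos s k) =
      if k - 2^(lg k) = 0 then (if r = 1 then some (lg k) else none)
      else if r = lg (k - 2^(lg k)) + 2 then some (cpos s (k - 2^(lg (k - 2^(lg k)))))
      else none := by
  have h0 : (1:ℕ) ≤ 2^s := Nat.one_le_two_pow
  have h1 : ¬ (cpos s k < s) := by simp only [cpos]; omega
  have h2 : ¬ (cpos s k < s + 2^s) := by simp only [cpos]; omega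
  have h3 : cpos s k - (s + 2^s) + 1 = k := by simp only [cpos]; omega
  simp only [ctrlN, h3]; rw [if_neg h1, if_neg h2]
lemma sttN_in {s x n t} (h : t < s) : sttN s x n t = x ⟨t, h⟩ := by simp [sttN, h]
lemma sttN_u {s x n m} (hm : m < 2^s) :
    sttN s x n (s + m) =
      if m = 0 then false
      else if lg m + 3 < n then P s x m
      else if lg m + 2 < n then xv s x (lg m)
      else false := by
  have h1 : ¬ (s + m < s) := by omega
  have h2 : s + m < s + 2^s := by omega
  have h3 : s + m - s = m := by omega
  simp only [sttN, h3]; rw [dif_neg h1, if_pos h2]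
lemma sttN_c {s x n k} (hk : 1 ≤ k) :
    sttN s x n (cpos s k) = if tau k < n then xv s x (lg k) else false := by
  have h0 : (1:ℕ) ≤ 2^s := Nat.one_le_two_pow
  have h1 : ¬ (cpos s k < s) := by simp only [cpos]; omega
  have h2 : ¬ (cpos s k < s + 2^s) := by simp only [cpos]; omega
  have h3 : cpos s k - (s + 2^s) + 1 = k := by simp only [cpos]; omega
  simp only [sttN, h3]; rw [dif_neg h1, if_neg h2]

lemma tau_le {k : ℕ} (hk : 1 ≤ k) : tau k ≤ lg k + 1 := by
  unfold tau
  split_ifs with hi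
  · omega
  · have := lg_lt_self_of_sub hk hi; omega

lemma P_zero (s : ℕ) (x : Fin s → Bool) : P s x 0 = false := by
  simp [P, Nat.zero_testBit]

lemma P_split {s j m' : ℕ} (x : Fin s → Bool) (hj : j < s) (hm' : m' < 2^j) :
    P s x (2^j + m') = xor (xv s x j) (P s x m') := by
  have hbit : ∀ i : ℕ, i ≠ j → (2^j + m').testBit i = m'.testBit i := by
    intro i hij
    rcases Nat.lt_or_ge i j with h | h
    · exact Nat.testBit_two_pow_add_gt h m'
    · have hij' : j < i := by omega
      have hle : 2^(j+1) ≤ 2^i := Nat.pow_le_pow_right (by norm_num) (by omega)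
      have h1 : (2^j + m') < 2^i := by have := (by rw [pow_succ]; omega : 2^j + m' < 2^(j+1)); omega
      have h2 : m' < 2^i := by omega
      rw [Nat.testBit_lt_two_pow h1, Nat.testBit_lt_two_pow h2]
  have hbitj : (2^j + m').testBit j = true := by
    rw [Nat.testBit_two_pow_add_eq, Nat.testBit_lt_two_pow hm']; rfl
  have hbitj' : m'.testBit j = false := Nat.testBit_lt_two_pow hm'
  have hpar : ∀ c : ℕ, decide ((c+1) % 2 = 1) = !decide (c % 2 = 1) := by
    intro c; rcases Nat.mod_two_eq_zero_or_one c with h | h <;> simp [Nat.add_mod, h]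
  set jF : Fin s := ⟨j, hj⟩ with hjF
  rcases hxj : x jF with _ | _
  · -- x j = false : sets equal
    have hset : (Finset.univ.filter
        fun i : Fin s => (2^j + m').testBit i.val = true ∧ x i = true) =
        (Finset.univ.filter fun i : Fin s => m'.testBit i.val = true ∧ x i = true) := by
      apply Finset.filter_congr
      intro i _
      by_cases hij : i.val = j
      · have : i = jF := Fin.ext hij
        subst this
        simp [hxj]
      · rw [hbit i.val hij]
    have hxv : xv s x j = false := by rw [xv, dif_pos hj, ← hjF, hxj]
    rw [P, P, hset, hxv, Bool.false_xor]
  · -- x j = true : insert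
    have hnotmem : jF ∉ (Finset.univ.filter
        fun i : Fin s => m'.testBit i.val = true ∧ x i = true) := by
      simp [hjF, hbitj']
    have hset : (Finset.univ.filter
        fun i : Fin s => (2^j + m').testBit i.val = true ∧ x i = true) =
        insert jF (Finset.univ.filter fun i : Fin s => m'.testBit i.val = true ∧ x i = true) := by
      ext i
      simp only [Finset.mem_filter, Finset.mem_univ, true_and, Finset.mem_insert]
      by_cases hij : i.val = j
      · have hi : i = jF := Fin.ext hij
        subst hi
        simp [hij, hbitj, hxj]
      · rw [hbit i.val hij]
        constructor
        · intro h; exact Or.inr h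
        · rintro (h | h)
          · exact absurd (congrArg Fin.val h) hij
          · exact h
    have hxv : xv s x j = true := by rw [xv, dif_pos hj, ← hjF, hxj]
    rw [P, P, hset, Finset.card_insert_of_notMem hnotmem, hxv, hpar, Bool.true_xor]

-- decomposition of a `some` value of ctrlN
lemma ctrlN_some_cases {s r t c : ℕ} (ht : t < NN s) (h : ctrlN s r t = some c) :
    (∃ m, 1 ≤ m ∧ m < 2^s ∧ t = s + m ∧ r = lg m + 2 ∧ c = cpos s m) ∨
    (∃ m, 1 ≤ m ∧ m < 2^s ∧ t = s + m ∧ r = lg m + 3 ∧ c = s + (m - 2^(lg m))) ∨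
    (∃ k, 1 ≤ k ∧ k < 2^s ∧ t = cpos s k ∧ k - 2^(lg k) = 0 ∧ r = 1 ∧ c = lg k) ∨
    (∃ k, 1 ≤ k ∧ k < 2^s ∧ t = cpos s k ∧ k - 2^(lg k) ≠ 0 ∧ r = lg (k - 2^(lg k)) + 2 ∧
      c = cpos s (k - 2^(lg (k - 2^(lg k))))) := by
  have hNN := NN_eq s
  have h2s : (1:ℕ) ≤ 2^s := Nat.one_le_two_pow
  by_cases h1 : t < s
  · rw [ctrlN_in h1] at h; simp at h
  by_cases h2 : t < s + 2^s
  · set m := t - s with hm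
    have htm : t = s + m := by omega
    have hms : m < 2^s := by omega
    rw [htm, ctrlN_u hms] at h
    by_cases hm0 : m = 0
    · rw [if_pos hm0] at h; simp at h
    rw [if_neg hm0] at h
    by_cases hr2 : r = lg m + 2
    · rw [if_pos hr2] at h
      exact Or.inl ⟨m, by omega, hms, htm, hr2, (Option.some.injEq _ _ ▸ h).symm⟩
    rw [if_neg hr2] at h
    by_cases hr3 : r = lg m + 3
    · rw [if_pos hr3] at h
      exact Or.inr (Or.inl ⟨m, by omega, hms, htm, hr3, (Option.some.injEq _ _ ▸ h).symm⟩)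
    · rw [if_neg hr3] at h; simp at h
  · set k := t - (s + 2^s) + 1 with hkdef
    have hk1 : 1 ≤ k := by omega
    have htk : t = cpos s k := by simp only [cpos]; omega
    have hks : k < 2^s := by omega
    rw [htk, ctrlN_c hk1] at h
    by_cases hi : k - 2^(lg k) = 0
    · rw [if_pos hi] at h
      by_cases hr : r = 1
      · rw [if_pos hr] at h
        exact Or.inr (Or.inr (Or.inl ⟨k, hk1, hks, htk, hi, hr,
          (Option.some.injEq _ _ ▸ h).symm⟩))
      · rw [if_neg hr] at h; simp at h
    · rw [if_neg hi] at h
      by_cases hr : r = lg (k - 2^(lg k)) + 2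
      · rw [if_pos hr] at h
        exact Or.inr (Or.inr (Or.inr ⟨k, hk1, hks, htk, hi, hr,
          (Option.some.injEq _ _ ▸ h).symm⟩))
      · rw [if_neg hr] at h; simp at h

-- facts about the double decomposition in case 4
lemma k''_facts {k : ℕ} (hk : 1 ≤ k) (hi : k - 2^(lg k) ≠ 0) :
    1 ≤ k - 2^(lg (k - 2^(lg k))) ∧
    lg (k - 2^(lg (k - 2^(lg k)))) = lg k ∧
    (k - 2^(lg (k - 2^(lg k)))) - 2^(lg k) = (k - 2^(lg k)) - 2^(lg (k - 2^(lg k))) := by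
  have hpow : 2^(lg k) ≤ k := pow_lg_le hk
  have hilt : k - 2^(lg k) < 2^(lg k) := sub_pow_lt hk
  have hia : 2^(lg (k - 2^(lg k))) ≤ k - 2^(lg k) := pow_lg_le (by omega)
  have haj : lg (k - 2^(lg k)) < lg k := lg_lt_self_of_sub hk hi
  have hmono : 2^(lg (k - 2^(lg k))) < 2^(lg k) :=
    Nat.pow_lt_pow_right (by norm_num) haj
  have h1 : 1 ≤ k - 2^(lg (k - 2^(lg k))) := by omega
  have hp : (2:ℕ)^(lg k + 1) = 2^(lg k) * 2 := pow_succ 2 (lg k)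
  have h2 : lg (k - 2^(lg (k - 2^(lg k)))) = lg k := by
    apply lg_eq
    · exact le_trans (by omega : 2^(lg k) ≤ k - (k - 2^(lg k)))
        (Nat.sub_le_sub_left hia k)
    · have := lt_pow_lg k
      have := Nat.sub_le k (2^(lg (k - 2^(lg k))))
      omega
  exact ⟨h1, h2, by omega⟩

lemma ctrlN_bound {s r t c : ℕ} (ht : t < NN s) (h : ctrlN s r t = some c) : c < NN s := by
  have hNN := NN_eq s
  have h2s : (1:ℕ) ≤ 2^s := Nat.one_le_two_pow
  rcases ctrlN_some_cases ht h with ⟨m, h1, h2, _, _, rfl⟩ | ⟨m, h1, h2, _, _, rfl⟩ |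
    ⟨k, h1, h2, _, _, _, rfl⟩ | ⟨k, h1, h2, _, _, _, rfl⟩
  · simp only [cpos]; omega
  · have : m - 2^(lg m) < m := by have := pow_lg_le h1; have := Nat.two_pow_pos (lg m); omega
    omega
  · have := lg_lt h1 h2; omega
  · have hx1 : k - 2^(lg (k - 2^(lg k))) ≤ k := Nat.sub_le _ _
    have hx2 : (1:ℕ) ≤ 2^(lg (k - 2^(lg k))) := Nat.one_le_two_pow
    simp only [cpos]; omega

lemma ctrlN_H {s r t c : ℕ} (ht : t < NN s) (h : ctrlN s r t = some c) :
    ctrlN s r c = none := by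
  rcases ctrlN_some_cases ht h with ⟨m, h1, h2, _, hr, rfl⟩ | ⟨m, h1, h2, _, hr, rfl⟩ |
    ⟨k, h1, h2, _, hi, hr, rfl⟩ | ⟨k, h1, h2, _, hi, hr, rfl⟩
  · -- c = cpos s m, r = lg m + 2
    by_cases hi : m - 2^(lg m) = 0
    · rw [ctrlN_c h1, if_pos hi, if_neg (by omega)]
    · have := lg_lt_self_of_sub h1 hi
      rw [ctrlN_c h1, if_neg hi, if_neg (by omega)]
  · -- c = s + (m - 2^(lg m)), r = lg m + 3
    have hsub : m - 2^(lg m) < 2^(lg m) := sub_pow_lt h1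
    have hlgs : lg m < s := lg_lt h1 h2
    have hlt : m - 2^(lg m) < 2^s := by
      have : (2:ℕ)^(lg m) ≤ 2^s := Nat.pow_le_pow_right (by norm_num) (by omega)
      omega
    rw [ctrlN_u hlt]
    by_cases hm0 : m - 2^(lg m) = 0
    · rw [if_pos hm0]
    · have := lg_lt (by omega : 1 ≤ m - 2^(lg m)) hsub
      rw [if_neg hm0, if_neg (by omega), if_neg (by omega)]
  · -- c = lg k, r = 1
    exact ctrlN_in (lg_lt h1 h2)
  · -- c = cpos s (k - 2^(lg i)), r = lg i + 2
    obtain ⟨hk1, hk2, hk3⟩ := k''_facts h1 hi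
    have hii : (k - 2^(lg k)) - 2^(lg (k - 2^(lg k))) < 2^(lg (k - 2^(lg k))) :=
      sub_pow_lt (by omega)
    rw [ctrlN_c hk1, hk2, hk3]
    by_cases hi2 : (k - 2^(lg k)) - 2^(lg (k - 2^(lg k))) = 0
    · rw [if_pos hi2, if_neg (by omega)]
    · have := lg_lt (by omega : 1 ≤ (k - 2^(lg k)) - 2^(lg (k - 2^(lg k)))) hii
      rw [if_neg hi2, if_neg (by omega)]

lemma ctrlN_inj {s r t₁ t₂ c : ℕ} (h₁ : t₁ < NN s) (h₂ : t₂ < NN s)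
    (e₁ : ctrlN s r t₁ = some c) (e₂ : ctrlN s r t₂ = some c) : t₁ = t₂ := by
  have hNN := NN_eq s
  have h2s : (1:ℕ) ≤ 2^s := Nat.one_le_two_pow
  rcases ctrlN_some_cases h₁ e₁ with ⟨m₁, a1, a2, a3, a4, a5⟩ | ⟨m₁, a1, a2, a3, a4, a5⟩ |
    ⟨k₁, a1, a2, a3, a6, a4, a5⟩ | ⟨k₁, a1, a2, a3, a6, a4, a5⟩ <;>
  rcases ctrlN_some_cases h₂ e₂ with ⟨m₂, b1, b2, b3, b4, b5⟩ | ⟨m₂, b1, b2, b3, b4, b5⟩ |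
    ⟨k₂, b1, b2, b3, b6, b4, b5⟩ | ⟨k₂, b1, b2, b3, b6, b4, b5⟩
  · -- 1,1
    simp only [cpos] at a5 b5; omega
  · -- 1,2 : c = cpos s m₁ = s + (m₂ - 2^(lg m₂)) : ranges disjoint
    have : m₂ - 2^(lg m₂) < 2^s := by have := sub_pow_lt b1; have : (2:ℕ)^(lg m₂) ≤ 2^s := Nat.pow_le_pow_right (by norm_num) (by have := lg_lt b1 b2; omega); omega
    simp only [cpos] at a5; omega
  · -- 1,3 : r values
    omega
  · -- 1,4 : cpos m₁ = cpos k₂'' with lg mismatch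
    obtain ⟨c1, c2, _⟩ := k''_facts b1 b6
    have hm₁ : m₁ = k₂ - 2^(lg (k₂ - 2^(lg k₂))) := by simp only [cpos] at a5 b5; omega
    have : lg m₁ = lg k₂ := by rw [hm₁, c2]
    have := lg_lt_self_of_sub b1 b6
    omega
  · -- 2,1 symmetric to 1,2
    have : m₁ - 2^(lg m₁) < 2^s := by have := sub_pow_lt a1; have : (2:ℕ)^(lg m₁) ≤ 2^s := Nat.pow_le_pow_right (by norm_num) (by have := lg_lt a1 a2; omega); omega
    simp only [cpos] at b5; omega
  · -- 2,2
    have ha : 2^(lg m₁) ≤ m₁ := pow_lg_le a1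
    have hb : 2^(lg m₂) ≤ m₂ := pow_lg_le b1
    have hlg : lg m₁ = lg m₂ := by omega
    have hc : m₁ - 2^(lg m₁) = m₂ - 2^(lg m₂) := by omega
    rw [hlg] at ha hc
    rw [a3, b3]
    omega
  · -- 2,3 r mismatch
    omega
  · -- 2,4 : c ranges
    obtain ⟨c1, c2, _⟩ := k''_facts b1 b6
    have : m₁ - 2^(lg m₁) < 2^s := by have := sub_pow_lt a1; have : (2:ℕ)^(lg m₁) ≤ 2^s := Nat.pow_le_pow_right (by norm_num) (by have := lg_lt a1 a2; omega); omega
    simp only [cpos] at b5; omega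
  · -- 3,1 r mismatch
    omega
  · -- 3,2 r mismatch
    omega
  · -- 3,3
    have ha : 2^(lg k₁) ≤ k₁ := pow_lg_le a1
    have hb : 2^(lg k₂) ≤ k₂ := pow_lg_le b1
    have hk₁ : k₁ = 2^(lg k₁) := by omega
    have hk₂ : k₂ = 2^(lg k₂) := by omega
    have : lg k₁ = lg k₂ := by omega
    rw [a3, b3, hk₁, hk₂, this]
  · -- 3,4 r mismatch
    omega
  · -- 4,1 symmetric to 1,4
    obtain ⟨c1, c2, _⟩ := k''_facts a1 a6
    have hm₂ : m₂ = k₁ - 2^(lg (k₁ - 2^(lg k₁))) := by simp only [cpos] at a5 b5; omega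
    have : lg m₂ = lg k₁ := by rw [hm₂, c2]
    have := lg_lt_self_of_sub a1 a6
    omega
  · -- 4,2 ranges
    obtain ⟨c1, c2, _⟩ := k''_facts a1 a6
    have : m₂ - 2^(lg m₂) < 2^s := by have := sub_pow_lt b1; have : (2:ℕ)^(lg m₂) ≤ 2^s := Nat.pow_le_pow_right (by norm_num) (by have := lg_lt b1 b2; omega); omega
    simp only [cpos] at a5; omega
  · -- 4,3 r mismatch
    omega
  · -- 4,4
    obtain ⟨c1, c2, c3⟩ := k''_facts a1 a6
    obtain ⟨d1, d2, d3⟩ := k''_facts b1 b6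
    have hlgi : lg (k₁ - 2^(lg k₁)) = lg (k₂ - 2^(lg k₂)) := by omega
    have hceq : k₁ - 2^(lg (k₁ - 2^(lg k₁))) = k₂ - 2^(lg (k₂ - 2^(lg k₂))) := by
      simp only [cpos] at a5 b5; omega
    have ha : 2^(lg (k₁ - 2^(lg k₁))) ≤ k₁ - 2^(lg k₁) := pow_lg_le (by omega)
    have hb : 2^(lg (k₂ - 2^(lg k₂))) ≤ k₂ - 2^(lg k₂) := pow_lg_le (by omega)
    have hpa : 2^(lg k₁) ≤ k₁ := pow_lg_le a1
    have hpb : 2^(lg k₂) ≤ k₂ := pow_lg_le b1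
    rw [hlgi] at ha hceq
    have : k₁ = k₂ := by omega
    rw [a3, b3, this]

lemma xv_lt {s : ℕ} (x : Fin s → Bool) {j : ℕ} (h : j < s) : xv s x j = x ⟨j, h⟩ :=
  dif_pos h

lemma step_main (s : ℕ) (x : Fin s → Bool) (n : ℕ) :
    ∀ t, t < NN s →
      (match ctrlN s n t with
        | some c => xor (sttN s x n t) (sttN s x n c)
        | none => sttN s x n t) = sttN s x (n+1) t := by
  have hNN := NN_eq s
  have h2s : (1:ℕ) ≤ 2^s := Nat.one_le_two_pow
  intro t ht
  by_cases h1 : t < s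
  · rw [ctrlN_in h1]
    rw [sttN_in h1, sttN_in h1]
  by_cases h2 : t < s + 2^s
  · -- u region
    have htm : t = s + (t - s) := by omega
    set m := t - s with hmdef
    have hms : m < 2^s := by omega
    rw [htm]
    by_cases hm0 : m = 0
    · have hc : ctrlN s n (s + m) = none := by rw [ctrlN_u hms, if_pos hm0]
      rw [hc, sttN_u hms, sttN_u hms, if_pos hm0, if_pos hm0]
    · have hm1 : 1 ≤ m := by omega
      have hjs : lg m < s := lg_lt hm1 hms
      have hsub : m - 2^(lg m) < 2^(lg m) := sub_pow_lt hm1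
      have hple : 2^(lg m) ≤ m := pow_lg_le hm1
      have hpows : (2:ℕ)^(lg m) ≤ 2^s := Nat.pow_le_pow_right (by norm_num) (by omega)
      by_cases hn2 : n = lg m + 2
      · have hc : ctrlN s n (s + m) = some (cpos s m) := by
          rw [ctrlN_u hms, if_neg hm0, if_pos hn2]
        rw [hc]
        have hL : sttN s x n (s + m) = false := by
          rw [sttN_u hms, if_neg hm0, if_neg (by omega), if_neg (by omega)]
        have htau : tau m < n := by have := tau_le hm1; omega
        have hC : sttN s x n (cpos s m) = xv s x (lg m) := by
          rw [sttN_c hm1, if_pos htau]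
        have hR : sttN s x (n+1) (s + m) = xv s x (lg m) := by
          rw [sttN_u hms, if_neg hm0, if_neg (by omega), if_pos (by omega)]
        show xor (sttN s x n (s + m)) (sttN s x n (cpos s m)) = sttN s x (n+1) (s + m)
        rw [hL, hC, hR, Bool.false_xor]
      · by_cases hn3 : n = lg m + 3
        · have hc : ctrlN s n (s + m) = some (s + (m - 2^(lg m))) := by
            rw [ctrlN_u hms, if_neg hm0, if_neg hn2, if_pos hn3]
          rw [hc]
          have hL : sttN s x n (s + m) = xv s x (lg m) := by
            rw [sttN_u hms, if_neg hm0, if_neg (by omega), if_pos (by omega)]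
          have hC : sttN s x n (s + (m - 2^(lg m))) = P s x (m - 2^(lg m)) := by
            rw [sttN_u (by omega : m - 2^(lg m) < 2^s)]
            by_cases hz : m - 2^(lg m) = 0
            · rw [if_pos hz, hz, P_zero]
            · have := lg_lt (by omega : 1 ≤ m - 2^(lg m)) hsub
              rw [if_neg hz, if_pos (by omega)]
          have hR : sttN s x (n+1) (s + m) = P s x m := by
            rw [sttN_u hms, if_neg hm0, if_pos (by omega)]
          show xor (sttN s x n (s + m)) (sttN s x n (s + (m - 2^(lg m)))) =
            sttN s x (n+1) (s + m)
          rw [hL, hC, hR]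
          have hps := P_split x hjs hsub
          rw [show 2^(lg m) + (m - 2^(lg m)) = m from by omega] at hps
          rw [hps]
        · have hc : ctrlN s n (s + m) = none := by
            rw [ctrlN_u hms, if_neg hm0, if_neg hn2, if_neg hn3]
          rw [hc, sttN_u hms, sttN_u hms, if_neg hm0, if_neg hm0]
          by_cases hA : lg m + 3 < n
          · rw [if_pos hA, if_pos (by omega)]
          · by_cases hB : lg m + 2 < n
            · rw [if_neg hA, if_pos hB, if_neg (by omega), if_pos (by omega)]
            · rw [if_neg hA, if_neg hB, if_neg (by omega), if_neg (by omega)]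
  · -- copy region
    have htk : t = cpos s (t - (s + 2^s) + 1) := by simp only [cpos]; omega
    set k := t - (s + 2^s) + 1 with hkdef
    have hk1 : 1 ≤ k := by omega
    have hks : k < 2^s := by omega
    have hkj : lg k < s := lg_lt hk1 hks
    rw [htk]
    by_cases hi : k - 2^(lg k) = 0
    · have htau : tau k = 1 := by rw [tau, if_pos hi]
      by_cases hn : n = 1
      · have hc : ctrlN s n (cpos s k) = some (lg k) := by
          rw [ctrlN_c hk1, if_pos hi, if_pos hn]
        rw [hc]
        have hL : sttN s x n (cpos s k) = false := by
          rw [sttN_c hk1, if_neg (by omega)]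
        have hC : sttN s x n (lg k) = xv s x (lg k) := by
          rw [sttN_in hkj, xv_lt x hkj]
        have hR : sttN s x (n+1) (cpos s k) = xv s x (lg k) := by
          rw [sttN_c hk1, if_pos (by omega)]
        show xor (sttN s x n (cpos s k)) (sttN s x n (lg k)) = sttN s x (n+1) (cpos s k)
        rw [hL, hC, hR, Bool.false_xor]
      · have hc : ctrlN s n (cpos s k) = none := by
          rw [ctrlN_c hk1, if_pos hi, if_neg hn]
        rw [hc, sttN_c hk1, sttN_c hk1]
        by_cases hA : tau k < n
        · rw [if_pos hA, if_pos (by omega)]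
        · rw [if_neg hA, if_neg (by omega)]
    · have htau : tau k = lg (k - 2^(lg k)) + 2 := by rw [tau, if_neg hi]
      obtain ⟨hf1, hf2, hf3⟩ := k''_facts hk1 hi
      by_cases hn : n = lg (k - 2^(lg k)) + 2
      · have hc : ctrlN s n (cpos s k) = some (cpos s (k - 2^(lg (k - 2^(lg k))))) := by
          rw [ctrlN_c hk1, if_neg hi, if_pos hn]
        rw [hc]
        have hL : sttN s x n (cpos s k) = false := by
          rw [sttN_c hk1, if_neg (by omega)]
        have htau'' : tau (k - 2^(lg (k - 2^(lg k)))) < n := by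
          rw [tau, hf2, hf3]
          by_cases hz : (k - 2^(lg k)) - 2^(lg (k - 2^(lg k))) = 0
          · rw [if_pos hz]; omega
          · have := lg_lt (by omega : 1 ≤ (k - 2^(lg k)) - 2^(lg (k - 2^(lg k))))
              (sub_pow_lt (by omega : 1 ≤ k - 2^(lg k)))
            rw [if_neg hz]; omega
        have hC : sttN s x n (cpos s (k - 2^(lg (k - 2^(lg k))))) = xv s x (lg k) := by
          rw [sttN_c hf1, if_pos htau'', hf2]
        have hR : sttN s x (n+1) (cpos s k) = xv s x (lg k) := by
          rw [sttN_c hk1, if_pos (by omega)]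
        show xor (sttN s x n (cpos s k)) (sttN s x n (cpos s (k - 2^(lg (k - 2^(lg k)))))) =
          sttN s x (n+1) (cpos s k)
        rw [hL, hC, hR, Bool.false_xor]
      · have hc : ctrlN s n (cpos s k) = none := by
          rw [ctrlN_c hk1, if_neg hi, if_neg hn]
        rw [hc, sttN_c hk1, sttN_c hk1]
        by_cases hA : tau k < n
        · rw [if_pos hA, if_pos (by omega)]
        · rw [if_neg hA, if_neg (by omega)]

-- ========== the circuit ==========

def ctrlF (s r : ℕ) (t : Fin (NN s)) : Option (Fin (NN s)) :=
  match ctrlN s r t.val with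
  | some c => if hc : c < NN s then some ⟨c, hc⟩ else none
  | none => none

def layer (s r : ℕ) : Circuit (NN s) := layerOf (ctrlF s r)

def circ (s : ℕ) : Circuit (NN s) :=
  ((List.range (s+3)).map (layer s)).flatten

lemma ctrlF_some_iff {s r : ℕ} {t c : Fin (NN s)} :
    ctrlF s r t = some c ↔ ctrlN s r t.val = some c.val := by
  constructor
  · intro h
    rcases he : ctrlN s r t.val with _ | cv
    · simp [ctrlF, he] at h
    · simp only [ctrlF, he] at h
      by_cases hlt : cv < NN s
      · rw [dif_pos hlt] at h
        injection h with h'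
        rw [← h']
      · rw [dif_neg hlt] at h; simp at h
  · intro h
    have hlt : c.val < NN s := c.isLt
    simp only [ctrlF, h, dif_pos hlt]

lemma ctrlF_none_iff {s r : ℕ} {t : Fin (NN s)} :
    ctrlF s r t = none ↔ ctrlN s r t.val = none := by
  rcases he : ctrlN s r t.val with _ | cv
  · simp [ctrlF, he]
  · have hb : cv < NN s := ctrlN_bound t.isLt he
    simp [ctrlF, he, hb]

lemma ctrlF_H (s r : ℕ) : ∀ t c, ctrlF s r t = some c → ctrlF s r c = none := by
  intro t c h
  rw [ctrlF_some_iff] at h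
  rw [ctrlF_none_iff]
  exact ctrlN_H t.isLt h

lemma ctrlF_inj (s r : ℕ) :
    ∀ t₁ t₂ c, ctrlF s r t₁ = some c → ctrlF s r t₂ = some c → t₁ = t₂ := by
  intro t₁ t₂ c h₁ h₂
  rw [ctrlF_some_iff] at h₁ h₂
  exact Fin.ext (ctrlN_inj t₁.isLt t₂.isLt h₁ h₂)

lemma eval_layer (s r : ℕ) (x : Fin (NN s) → Bool) :
    Circuit.eval (layer s r) x = stepf (ctrlF s r) x :=
  eval_layerOf _ (ctrlF_H s r) x

lemma depthOne_layer (s r : ℕ) : DepthOne (layer s r) :=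
  depthOne_layerOf _ (ctrlF_H s r) (ctrlF_inj s r)

lemma stepF_eq (s : ℕ) (x : Fin s → Bool) (n : ℕ) (t : Fin (NN s)) :
    stepf (ctrlF s n) (fun u => sttN s x n u.val) t = sttN s x (n+1) t.val := by
  have hmain := step_main s x n t.val t.isLt
  rcases he : ctrlN s n t.val with _ | cv
  · rw [he] at hmain
    have : ctrlF s n t = none := ctrlF_none_iff.mpr he
    rw [stepf, this]
    exact hmain
  · rw [he] at hmain
    have hb : cv < NN s := ctrlN_bound t.isLt he
    have : ctrlF s n t = some ⟨cv, hb⟩ := ctrlF_some_iff.mpr he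
    rw [stepf, this]
    exact hmain

lemma eval_circ_aux (s : ℕ) (x : Fin s → Bool) :
    ∀ R : ℕ, Circuit.eval (((List.range R).map (layer s)).flatten)
      (fun u : Fin (NN s) => sttN s x 0 u.val) = fun u => sttN s x R u.val := by
  intro R
  induction R with
  | zero => simp [Circuit.eval]
  | succ R ih =>
    rw [List.range_succ, List.map_append, List.flatten_append, eval_append, ih]
    simp only [List.map_cons, List.map_nil, List.flatten_cons, List.flatten_nil,
      List.append_nil]
    rw [eval_layer]
    funext t
    exact stepF_eq s x R t

lemma pad_eq_stt0 (s : ℕ) (x : Fin s → Bool) :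
    (pad x : Fin (s + qq s) → Bool) = fun u : Fin (NN s) => sttN s x 0 u.val := by
  funext u
  rw [pad]
  by_cases h : u.val < s
  · rw [dif_pos h, sttN_in h]
  · rw [dif_neg h]
    rw [sttN]
    rw [dif_neg h]
    by_cases h2 : u.val < s + 2^s
    · rw [if_pos h2]
      by_cases h3 : u.val - s = 0
      · rw [if_pos h3]
      · rw [if_neg h3, if_neg (by omega), if_neg (by omega)]
    · rw [if_neg h2, if_neg (by omega)]

lemma eval_circ (s : ℕ) (x : Fin s → Bool) (t : Fin (NN s)) :
    Circuit.eval (circ s) (pad x) t = sttN s x (s+3) t.val := by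
  rw [circ, pad_eq_stt0, eval_circ_aux s x (s+3)]

lemma implements_circ (s : ℕ) : Implements (circ s) (subsetXorAll s) := by
  have hNN := NN_eq s
  have h2s : (1:ℕ) ≤ 2^s := Nat.one_le_two_pow
  have h2s' : (2:ℕ)^s ≤ NN s := by omega
  constructor
  · exact h2s'
  · haveI : NeZero (NN s) := ⟨by omega⟩
    refine ⟨Equiv.addLeft (⟨s, by omega⟩ : Fin (NN s)), ?_⟩
    intro x j hj
    have hjv : j.val < 2^s := j.isLt
    have hval : ((⟨s, by omega⟩ : Fin (NN s)) + ⟨j.val, hj⟩).val = s + j.val := by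
      simp only [Fin.val_add, Fin.val_mk]
      exact Nat.mod_eq_of_lt (by omega)
    show Circuit.eval (circ s) (pad x) ((⟨s, by omega⟩ : Fin (NN s)) + ⟨j.val, hj⟩) = _
    rw [eval_circ, hval, sttN_u hjv]
    by_cases hj0 : j.val = 0
    · rw [if_pos hj0]
      have : (j : ℕ) = 0 := hj0
      simp [subsetXorAll, this, Nat.zero_testBit]
    · have hj1 : 1 ≤ j.val := by omega
      have : lg j.val < s := lg_lt hj1 hjv
      rw [if_neg hj0, if_pos (by omega)]
      rfl



-- ========== gate count ==========

lemma list_sum_range {M : Type*} [AddCommMonoid M] (f : ℕ → M) (n : ℕ) :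
    ((List.range n).map f).sum = ∑ i ∈ Finset.range n, f i := by
  induction n with
  | zero => simp
  | succ n ih =>
    rw [List.range_succ, List.map_append, List.sum_append, Finset.sum_range_succ, ih]
    simp

lemma sum_range_add (f : ℕ → ℕ) (a b : ℕ) :
    ∑ i ∈ Finset.range (a+b), f i
      = (∑ i ∈ Finset.range a, f i) + ∑ i ∈ Finset.range b, f (a + i) := by
  induction b with
  | zero => simp
  | succ b ih =>
    rw [show a + (b+1) = (a+b)+1 from rfl, Finset.sum_range_succ, ih,
      Finset.sum_range_succ]
    omega

lemma ctrlF_isSome (s r : ℕ) (t : Fin (NN s)) :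
    (ctrlF s r t).isSome = (ctrlN s r t.val).isSome := by
  rcases he : ctrlN s r t.val with _ | cv
  · rw [ctrlF_none_iff.mpr he]; rfl
  · have hb : cv < NN s := ctrlN_bound t.isLt he
    have : ctrlF s r t = some ⟨cv, hb⟩ := ctrlF_some_iff.mpr he
    rw [this]
    rfl

lemma inner_in {s v : ℕ} (h : v < s) :
    ∑ r ∈ Finset.range (s+3), (if (ctrlN s r v).isSome then 1 else 0) = 0 := by
  apply Finset.sum_eq_zero
  intro r _
  rw [ctrlN_in h]
  rfl

lemma inner_u {s m : ℕ} (hm : m < 2^s) :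
    ∑ r ∈ Finset.range (s+3), (if (ctrlN s r (s+m)).isSome then 1 else 0)
      = if m = 0 then 0 else 2 := by
  by_cases hm0 : m = 0
  · rw [if_pos hm0]
    apply Finset.sum_eq_zero
    intro r _
    rw [ctrlN_u hm, if_pos hm0]
    rfl
  · rw [if_neg hm0]
    have hlg : lg m < s := lg_lt (by omega) hm
    have hptw : ∀ r ∈ Finset.range (s+3),
        (if (ctrlN s r (s+m)).isSome then 1 else 0) =
          (if r = lg m + 2 then 1 else 0) + (if r = lg m + 3 then 1 else 0) := by
      intro r _
      rw [ctrlN_u hm, if_neg hm0]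
      by_cases h2 : r = lg m + 2
      · rw [if_pos h2, if_pos h2, if_neg (show r ≠ lg m + 3 by omega)]
        simp
      · rw [if_neg h2, if_neg h2]
        by_cases h3 : r = lg m + 3
        · rw [if_pos h3, if_pos h3]
          simp
        · rw [if_neg h3, if_neg h3]
          simp
    rw [Finset.sum_congr rfl hptw, Finset.sum_add_distrib,
      Finset.sum_ite_eq' (Finset.range (s+3)) (lg m + 2) (fun _ => 1),
      Finset.sum_ite_eq' (Finset.range (s+3)) (lg m + 3) (fun _ => 1),
      if_pos (Finset.mem_range.mpr (by omega)),
      if_pos (Finset.mem_range.mpr (by omega))]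

lemma inner_c {s k : ℕ} (hk : 1 ≤ k) (hks : k < 2^s) :
    ∑ r ∈ Finset.range (s+3), (if (ctrlN s r (cpos s k)).isSome then 1 else 0) = 1 := by
  have hlg : lg k < s := lg_lt hk hks
  have htau : tau k ≤ lg k + 1 := tau_le hk
  have hptw : ∀ r ∈ Finset.range (s+3),
      (if (ctrlN s r (cpos s k)).isSome then 1 else 0) = (if r = tau k then 1 else 0) := by
    intro r _
    rw [ctrlN_c hk]
    by_cases hi : k - 2^(lg k) = 0
    · rw [if_pos hi]
      have ht1 : tau k = 1 := by rw [tau, if_pos hi]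
      by_cases hr : r = 1
      · rw [if_pos hr, if_pos (hr.trans ht1.symm)]
        simp
      · rw [if_neg hr, if_neg (show ¬ r = tau k from fun he => hr (he.trans ht1))]
        simp
    · rw [if_neg hi]
      have ht1 : tau k = lg (k - 2^(lg k)) + 2 := by rw [tau, if_neg hi]
      by_cases hr : r = lg (k - 2^(lg k)) + 2
      · rw [if_pos hr, if_pos (hr.trans ht1.symm)]
        simp
      · rw [if_neg hr, if_neg (show ¬ r = tau k from fun he => hr (he.trans ht1))]
        simp
  rw [Finset.sum_congr rfl hptw,
    Finset.sum_ite_eq' (Finset.range (s+3)) (tau k) (fun _ => 1),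
    if_pos (Finset.mem_range.mpr (by omega))]

lemma circ_length (s : ℕ) : (circ s).L = 3 * 2^s - 3 := by
  have hNN := NN_eq s
  have h2s : (1:ℕ) ≤ 2^s := Nat.one_le_two_pow
  have h1 : (circ s).L = ∑ r ∈ Finset.range (s+3), (layer s r).length := by
    rw [Circuit.L, circ, List.length_flatten, List.map_map]
    exact list_sum_range _ _
  have h2 : ∀ r, (layer s r).length
      = ∑ t : Fin (NN s), (if (ctrlN s r t.val).isSome then 1 else 0) := by
    intro r
    rw [layer, length_layerOf _ (ctrlF_H s r)]
    apply Finset.sum_congr rfl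
    intro t _
    rw [ctrlF_isSome]
  rw [h1]
  have h3 : ∑ r ∈ Finset.range (s+3), (layer s r).length
      = ∑ t : Fin (NN s), ∑ r ∈ Finset.range (s+3),
          (if (ctrlN s r t.val).isSome then 1 else 0) := by
    rw [Finset.sum_congr rfl (fun r _ => h2 r)]
    exact Finset.sum_comm
  rw [h3, Fin.sum_univ_eq_sum_range
    (fun v => ∑ r ∈ Finset.range (s+3), (if (ctrlN s r v).isSome then 1 else 0)) (NN s)]
  have hsplit : NN s = (s + 2^s) + (2^s - 1) := by omega
  rw [hsplit, sum_range_add, show s + 2^s = s + 2^s from rfl, sum_range_add]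
  have hA : ∑ i ∈ Finset.range s, ∑ r ∈ Finset.range (s+3),
      (if (ctrlN s r i).isSome then 1 else 0) = 0 :=
    Finset.sum_eq_zero (fun i hi => inner_in (Finset.mem_range.mp hi))
  have hB : ∑ i ∈ Finset.range (2^s), ∑ r ∈ Finset.range (s+3),
      (if (ctrlN s r (s + i)).isSome then 1 else 0) = 2 * 2^s - 2 := by
    have : ∀ i ∈ Finset.range (2^s), (∑ r ∈ Finset.range (s+3),
        (if (ctrlN s r (s + i)).isSome then 1 else 0)) = if i = 0 then 0 else 2 :=
      fun i hi => inner_u (Finset.mem_range.mp hi)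
    rw [Finset.sum_congr rfl this]
    rw [show (2:ℕ)^s = 1 + (2^s - 1) from by omega, sum_range_add]
    simp
    omega
  have hC : ∑ i ∈ Finset.range (2^s - 1), ∑ r ∈ Finset.range (s+3),
      (if (ctrlN s r (s + 2^s + i)).isSome then 1 else 0) = 2^s - 1 := by
    have : ∀ i ∈ Finset.range (2^s - 1), (∑ r ∈ Finset.range (s+3),
        (if (ctrlN s r (s + 2^s + i)).isSome then 1 else 0)) = 1 := by
      intro i hi
      have hi' := Finset.mem_range.mp hi
      have : s + 2^s + i = cpos s (i+1) := by simp only [cpos]; omega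
      rw [this]
      exact inner_c (by omega) (by omega)
    rw [Finset.sum_congr rfl this]
    simp
  rw [hA, hB, hC]
  omega


-- ========== depth ==========

lemma depth_le (s : ℕ) : Circuit.D (circ s) ≤ s + 3 := by
  apply Nat.sInf_le
  refine ⟨(List.range (s+3)).map (layer s), by simp, rfl, ?_⟩
  intro p hp
  obtain ⟨r, -, rfl⟩ := List.mem_map.mp hp
  exact depthOne_layer s r

lemma chain_le_depth {N : ℕ} :
    ∀ (parts : List (Circuit N)) (gs : List (Gate N)),
      (∀ p ∈ parts, DepthOne p) → gs.Sublist parts.flatten →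
      gs.Chain' (fun g g' => ¬ Disjoint (insert g.t g.I) (insert g'.t g'.I)) →
      gs.length ≤ parts.length := by
  intro parts
  induction parts with
  | nil =>
    intro gs _ hsub _
    simp only [List.flatten_nil, List.sublist_nil] at hsub
    simp [hsub]
  | cons p ps ih =>
    intro gs hd hsub hch
    rw [List.flatten_cons] at hsub
    obtain ⟨a, b, rfl, ha, hb⟩ := List.sublist_append_iff.mp hsub
    obtain ⟨hcha, hchb, -⟩ := List.isChain_append.mp hch
    have hlb := ih b (fun q hq => hd q (List.mem_cons_of_mem _ hq)) hb hchb
    have hla : a.length ≤ 1 := by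
      by_contra hlen
      push_neg at hlen
      match a, hcha, ha, hlen with
      | g₁ :: g₂ :: rest, hcha, ha, _ =>
        have hpair : List.Pairwise
            (fun g₁ g₂ => Disjoint (insert g₁.t g₁.I) (insert g₂.t g₂.I))
            (g₁ :: g₂ :: rest) :=
          List.Pairwise.sublist ha (hd p (List.mem_cons_self))
        have hdisj := (List.pairwise_cons.mp hpair).1 g₂ (List.mem_cons_self)
        have hnd := (List.isChain_cons_cons.mp hcha).1
        exact hnd hdisj
    simp only [List.length_append, List.length_cons]
    omega

/-- the chain gate `k`: CNOT from cell `2^(k+1)-1-2^k` to cell `2^(k+1)-1`. -/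
def chainGate (s : ℕ) (k : Fin s) : Gate (NN s) :=
  gateCT
    ⟨s + (2^(k.val+1) - 1 - 2^k.val), by
      have h1 : (2:ℕ)^(k.val+1) ≤ 2^s := Nat.pow_le_pow_right (by norm_num) (by omega)
      have h2 : (1:ℕ) ≤ 2^s := Nat.one_le_two_pow
      have := NN_eq s
      omega⟩
    ⟨s + (2^(k.val+1) - 1), by
      have h1 : (2:ℕ)^(k.val+1) ≤ 2^s := Nat.pow_le_pow_right (by norm_num) (by omega)
      have h2 : (1:ℕ) ≤ 2^s := Nat.one_le_two_pow
      have := NN_eq s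
      omega⟩
    (by
      have h1 : (1:ℕ) ≤ 2^k.val := Nat.one_le_two_pow
      have h2 : (2:ℕ)^(k.val+1) = 2^k.val * 2 := pow_succ 2 k.val
      intro he
      have := congrArg Fin.val he
      simp only [Fin.val_mk] at this
      omega)

lemma chainGate_mem (s : ℕ) (k : Fin s) :
    chainGate s k ∈ layer s (k.val + 3) := by
  apply mem_layerOf_intro
  rw [ctrlF_some_iff]
  show ctrlN s (k.val+3) (s + (2^(k.val+1) - 1)) = some (s + (2^(k.val+1) - 1 - 2^k.val))
  have h1 : (2:ℕ)^(k.val+1) ≤ 2^s := Nat.pow_le_pow_right (by norm_num) (by omega)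
  have h2 : (1:ℕ) ≤ 2^k.val := Nat.one_le_two_pow
  have h3 : (2:ℕ)^(k.val+1) = 2^k.val * 2 := pow_succ 2 k.val
  have hm : 2^(k.val+1) - 1 < 2^s := by omega
  have hlg : lg (2^(k.val+1) - 1) = k.val := by
    apply lg_eq
    · omega
    · omega
  rw [ctrlN_u hm, if_neg (by omega), if_neg (by rw [hlg]; omega), if_pos (by rw [hlg])]
  rw [hlg]

def chainList (s : ℕ) : List (Gate (NN s)) := (List.finRange s).map (chainGate s)

lemma chainList_chain' (s : ℕ) :
    (chainList s).Chain' (fun g g' => ¬ Disjoint (insert g.t g.I) (insert g'.t g'.I)) := by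
  show List.IsChain _ _
  rw [List.isChain_iff_getElem]
  intro i h
  simp only [chainList, List.length_map, List.length_finRange] at h
  have hi1 : i < s := by omega
  have hi2 : i + 1 < s := by omega
  have hget : ∀ (j : ℕ) (hj : j < s), (chainList s)[j]'
      (by simp [chainList, List.length_map, List.length_finRange]; omega)
        = chainGate s ⟨j, hj⟩ := by
    intro j hj
    simp [chainList, List.get_finRange]
  rw [hget i hi1, hget (i+1) hi2]
  rw [Finset.not_disjoint_iff]
  refine ⟨(chainGate s ⟨i, hi1⟩).t, Finset.mem_insert_self _ _, ?_⟩
  show _ ∈ insert (chainGate s ⟨i+1, hi2⟩).t (chainGate s ⟨i+1, hi2⟩).I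
  apply Finset.mem_insert_of_mem
  show _ ∈ ({⟨s + (2^(i+1+1) - 1 - 2^(i+1)), _⟩} : Finset (Fin (NN s)))
  rw [Finset.mem_singleton]
  apply Fin.ext
  show s + (2^(i+1) - 1) = s + (2^(i+1+1) - 1 - 2^(i+1))
  have h3 : (2:ℕ)^(i+1+1) = 2^(i+1) * 2 := pow_succ 2 (i+1)
  have h2 : (1:ℕ) ≤ 2^(i+1) := Nat.one_le_two_pow
  omega

lemma forall2_mem_sublist_flatten {α : Type*} :
    ∀ {qs : List α} {ps : List (List α)},
      List.Forall₂ (· ∈ ·) qs ps → qs.Sublist ps.flatten := by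
  intro qs ps h
  induction h with
  | nil => simp
  | @cons q p qs' ps' hq _ ih =>
    rw [List.flatten_cons]
    obtain ⟨l₁, l₂, rfl⟩ := List.append_of_mem hq
    have step1 : (q :: qs').Sublist (q :: (l₂ ++ ps'.flatten)) :=
      List.Sublist.cons₂ q (ih.trans (List.sublist_append_right l₂ ps'.flatten))
    have step2 : (q :: (l₂ ++ ps'.flatten)).Sublist (l₁ ++ (q :: (l₂ ++ ps'.flatten))) :=
      List.sublist_append_right l₁ _
    have := step1.trans step2
    rwa [show l₁ ++ (q :: (l₂ ++ ps'.flatten)) = (l₁ ++ q :: l₂) ++ ps'.flatten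
      from by simp] at this

lemma chainList_sublist (s : ℕ) : (chainList s).Sublist (circ s) := by
  have hf : List.Forall₂ (· ∈ ·) (chainList s) ((List.range' 3 s).map (layer s)) := by
    rw [List.forall₂_iff_get]
    constructor
    · simp [chainList]
    · intro i h₁ h₂
      simp only [chainList, List.length_map, List.length_finRange] at h₁
      have hget1 : (chainList s).get ⟨i, by simpa [chainList] using h₁⟩
          = chainGate s ⟨i, h₁⟩ := by
        simp [chainList, List.get_finRange]
      have hget2 : ((List.range' 3 s).map (layer s)).get ⟨i, h₂⟩ = layer s (3 + i) := by
        simp [List.getElem_range']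
      rw [hget1, hget2, show 3 + i = i + 3 from by omega]
      exact chainGate_mem s ⟨i, h₁⟩
  have h1 : (chainList s).Sublist ((List.range' 3 s).map (layer s)).flatten :=
    forall2_mem_sublist_flatten hf
  have h2 : circ s = ((List.range' 0 3).map (layer s)).flatten
      ++ ((List.range' 3 s).map (layer s)).flatten := by
    rw [circ, List.range_eq_range']
    rw [show (List.range' 0 (s+3)) = List.range' 0 3 ++ List.range' 3 s from by
      have := @List.range'_append 0 3 s 1
      rw [Nat.add_comm s 3]; simpa using this.symm]
    rw [List.map_append, List.flatten_append]
  rw [h2]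
  exact h1.trans (List.sublist_append_right _ _)

lemma depth_ge (s : ℕ) : s ≤ Circuit.D (circ s) := by
  apply le_csInf
  · exact ⟨s + 3, (List.range (s+3)).map (layer s), by simp, rfl, by
      intro p hp
      obtain ⟨r, -, rfl⟩ := List.mem_map.mp hp
      exact depthOne_layer s r⟩
  · rintro d ⟨parts, hlen, hflat, hdd⟩
    have := chain_le_depth parts (chainList s) hdd
      (by rw [hflat]; exact chainList_sublist s) (chainList_chain' s)
    simpa [chainList, hlen] using this


-- ========== asymptotics helpers ==========

lemma half_pow_tendsto : Tendsto (fun s : ℕ => ((1:ℝ)/2)^s) atTop (nhds 0) :=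
  tendsto_pow_atTop_nhds_zero_of_lt_one (by norm_num) (by norm_num)

lemma one_sub_half_pow : Tendsto (fun s : ℕ => 1 - ((1:ℝ)/2)^s) atTop (nhds 1) := by
  have h := (tendsto_const_nhds : Tendsto (fun _ : ℕ => (1:ℝ)) atTop (nhds 1)).sub
    half_pow_tendsto
  simpa using h

lemma circ_card_one (s : ℕ) : ∀ g ∈ circ s, g.I.card = 1 := by
  intro g hg
  rw [circ] at hg
  obtain ⟨l, hl, hgl⟩ := List.mem_flatten.mp hg
  obtain ⟨r, -, rfl⟩ := List.mem_map.mp hl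
  exact card_layerOf hgl

/-- All `2ˢ` subset-XORs of `s` variables can be implemented by reversible circuits
`S_s` consisting only of CNOT gates, with `q s` additional inputs, where
`D(S_s) ~ s`, `L(S_s) ~ 3 · 2ˢ` and `q s ~ 2^{s+1}`. -/
theorem subset_xors_depth :
    ∃ (q : ℕ → ℕ) (S : ∀ s, Circuit (s + q s)),
      (∀ s, (∀ g ∈ S s, g.I.card = 1) ∧ Implements (S s) (subsetXorAll s)) ∧
      AsympEquiv (fun s => ((S s).D : ℝ)) (fun s => (s : ℝ)) ∧
      AsympEquiv (fun s => ((S s).L : ℝ)) (fun s => 3 * (2 : ℝ) ^ s) ∧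
      AsympEquiv (fun s => (q s : ℝ)) (fun s => (2 : ℝ) ^ (s + 1)) := by
  refine ⟨qq, circ, fun s => ⟨circ_card_one s, implements_circ s⟩, ?_, ?_, ?_⟩
  · -- depth
    have h1 : Tendsto (fun _ : ℕ => (1:ℝ)) atTop (nhds 1) := tendsto_const_nhds
    have h2 : Tendsto (fun s : ℕ => 1 + 3/(s:ℝ)) atTop (nhds 1) := by
      have h := (tendsto_const_nhds : Tendsto (fun _ : ℕ => (1:ℝ)) atTop (nhds 1)).add
        (tendsto_const_div_atTop_nhds_zero_nat 3)
      simpa using h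
    refine tendsto_of_tendsto_of_tendsto_of_le_of_le' h1 h2 ?_ ?_
    · filter_upwards [eventually_ge_atTop 1] with s hs
      have hD := depth_ge s
      have hs' : (0:ℝ) < (s:ℝ) := by exact_mod_cast hs
      rw [le_div_iff₀ hs', one_mul]
      exact_mod_cast hD
    · filter_upwards [eventually_ge_atTop 1] with s hs
      have hD := depth_le s
      have hs' : (0:ℝ) < (s:ℝ) := by exact_mod_cast hs
      rw [div_le_iff₀ hs']
      have he : (1 + 3/(s:ℝ)) * s = s + 3 := by field_simp
      rw [he]
      exact_mod_cast hD
  · -- gate count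
    have heq : (fun s : ℕ => ((circ s).L : ℝ) / (3 * (2:ℝ)^s))
        = fun s : ℕ => 1 - ((1:ℝ)/2)^s := by
      funext s
      rw [circ_length]
      have h2s : (1:ℕ) ≤ 2^s := Nat.one_le_two_pow
      have h3 : (3:ℕ) ≤ 3 * 2^s := by omega
      have hcast : ((3 * 2^s - 3 : ℕ) : ℝ) = 3 * (2:ℝ)^s - 3 := by
        rw [Nat.cast_sub h3]
        push_cast
        ring
      rw [hcast]
      have hp : ((2:ℝ)^s) ≠ 0 := by positivity
      have hhalf : ((1:ℝ)/2)^s = ((2:ℝ)^s)⁻¹ := by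
        rw [div_pow, one_pow, one_div]
      rw [hhalf]
      field_simp
    rw [AsympEquiv, heq]
    exact one_sub_half_pow
  · -- ancillas
    have heq : (fun s : ℕ => ((qq s : ℕ) : ℝ) / (2:ℝ)^(s+1))
        = fun s : ℕ => 1 - ((1:ℝ)/2)^(s+1) := by
      funext s
      rw [qq]
      have h2s : (1:ℕ) ≤ 2^(s+1) := Nat.one_le_two_pow
      have hcast : ((2^(s+1) - 1 : ℕ) : ℝ) = (2:ℝ)^(s+1) - 1 := by
        rw [Nat.cast_sub h2s]
        push_cast
        ring
      rw [hcast]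
      have hp : ((2:ℝ)^(s+1)) ≠ 0 := by positivity
      have hhalf : ((1:ℝ)/2)^(s+1) = ((2:ℝ)^(s+1))⁻¹ := by
        rw [div_pow, one_pow, one_div]
      rw [hhalf]
      field_simp
    rw [AsympEquiv]
    rw [show (fun s : ℕ => ((qq s : ℕ) : ℝ) / (2:ℝ)^(s+1))
      = fun s : ℕ => 1 - ((1:ℝ)/2)^(s+1) from heq]
    have h := (tendsto_const_nhds : Tendsto (fun _ : ℕ => (1:ℝ)) atTop (nhds 1)).sub
      (half_pow_tendsto.comp (tendsto_add_atTop_nat 1))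
    simpa [Function.comp] using h

end Rev
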